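/- Let π(x,y) = (2y(y−x+2)/(x−y)², y²/(x−y)²) for x ≠ y, over the field ℂ of complex numbers, and let τ(x,y) = ((2y−x)/(y−x+1), y/(y−x+1)). Let p, q ∈ ℂ with q ≠ 0 and p² ≠ 4q. Then the fiber {(x,y) ∈ ℂ² : x ≠ y and π(x,y) = (p,q)} consists of exactly two points, and the involution τ maps each of these two points to the other. (Hence π is a double cover away from the balanced parabola p² = 4q.) -/

import Mathlib

/-- The Pappus–Steiner map `π(x,y) = (2y(y−x+2)/(x−y)², y²/(x−y)²)`. -/
def pap {k : Type*} [Field k] (z : k × k) : k × k :=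
  (2 * z.2 * (z.2 - z.1 + 2) / (z.1 - z.2) ^ 2, z.2 ^ 2 / (z.1 - z.2) ^ 2)

/-- The involution associated to the Pappus–Steiner map:
`τ(x,y) = ((2y−x)/(y−x+1), y/(y−x+1))`. -/
def tauInv {k : Type*} [Field k] (z : k × k) : k × k :=
  ((2 * z.2 - z.1) / (z.2 - z.1 + 1), z.2 / (z.2 - z.1 + 1))

lemma tau_step (p s : ℂ) (hps : p + 2*s ≠ 0) (hms : p - 2*s ≠ 0) :
    tauInv ((4*s^2+4*s)/(p+2*s), 4*s^2/(p+2*s)) = ((4*s^2-4*s)/(p-2*s), 4*s^2/(p-2*s)) := by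
  have hD : (4*s^2/(p+2*s) - (4*s^2+4*s)/(p+2*s) + 1) = (p-2*s)/(p+2*s) := by
    rw [div_sub_div_same, div_add_one hps]
    congr 1
    ring
  simp only [tauInv, Prod.mk.injEq, hD]
  constructor <;>
    first
      | (rw [div_div_div_cancel_right₀ hps])
      | (field_simp; ring)
      | field_simp

lemma pap_fiber_pt (p s : ℂ) (hs : s ≠ 0) (hps : p + 2*s ≠ 0) :
    ((4*s^2+4*s)/(p+2*s) : ℂ) ≠ 4*s^2/(p+2*s) ∧
      pap (((4*s^2+4*s)/(p+2*s) : ℂ), (4*s^2/(p+2*s) : ℂ)) = (p, s^2) := by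
  have hd : ((4*s^2+4*s)/(p+2*s) : ℂ) - 4*s^2/(p+2*s) = 4*s/(p+2*s) := by
    field_simp
    ring
  have hdne : ((4*s^2+4*s)/(p+2*s) : ℂ) - 4*s^2/(p+2*s) ≠ 0 := by
    rw [hd]
    exact div_ne_zero (by simpa using hs) hps
  refine ⟨sub_ne_zero.mp hdne, ?_⟩
  simp only [pap, Prod.mk.injEq, hd]
  constructor
  · rw [div_eq_iff (pow_ne_zero 2 (div_ne_zero (by simpa using hs) hps))]
    field_simp
    ring
  · rw [div_eq_iff (pow_ne_zero 2 (div_ne_zero (by simpa using hs) hps))]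
    field_simp

/-- Away from the balanced parabola `p² = 4q`, the fiber of `π` over `(p,q)` consists
of exactly two points, interchanged by the involution `τ`. -/
theorem pap_double_cover (p q : ℂ) (hq : q ≠ 0) (hpq : p ^ 2 ≠ 4 * q) :
    ∃ a b : ℂ × ℂ, a ≠ b ∧
      {z : ℂ × ℂ | z.1 ≠ z.2 ∧ pap z = (p, q)} = {a, b} ∧
      tauInv a = b ∧ tauInv b = a := by
  obtain ⟨s, hs⟩ : ∃ s : ℂ, s^2 = q := IsAlgClosed.exists_pow_nat_eq q two_pos
  have hsne : s ≠ 0 := by rintro rfl; rw [← hs] at hq; simp at hq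
  have hps : p + 2*s ≠ 0 := by
    intro h; exact hpq (by linear_combination (p - 2*s)*h + 4*hs)
  have hms : p - 2*s ≠ 0 := by
    intro h; exact hpq (by linear_combination (p + 2*s)*h + 4*hs)
  set a : ℂ × ℂ := ((4*s^2+4*s)/(p+2*s), 4*s^2/(p+2*s)) with ha
  set b : ℂ × ℂ := ((4*s^2-4*s)/(p-2*s), 4*s^2/(p-2*s)) with hb
  have e1 : 4*(-s)^2+4*(-s) = 4*s^2-4*s := by ring
  have e2 : (4:ℂ)*(-s)^2 = 4*s^2 := by ring
  have e3 : p + 2*(-s) = p - 2*s := by ring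
  have e4 : p - 2*(-s) = p + 2*s := by ring
  have e5 : (-s)^2 = s^2 := by ring
  have hafib := pap_fiber_pt p s hsne hps
  have hbfib := pap_fiber_pt p (-s) (neg_ne_zero.mpr hsne) (e3 ▸ hms)
  rw [e1, e2, e3, e5] at hbfib
  have htab := tau_step p s hps hms
  have htba := tau_step p (-s) (e3 ▸ hms) (e4 ▸ hps)
  have e6 : 4*s^2 - 4*(-s) = 4*s^2 + 4*s := by ring
  rw [e1, e2, e3, e4, e6] at htba
  have hane : a ≠ b := by
    intro h
    have h2 : a.2 = b.2 := by rw [h]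
    simp only [ha, hb] at h2
    rw [div_eq_div_iff hps hms] at h2
    have h3 := mul_left_cancel₀ (mul_ne_zero (by norm_num) (pow_ne_zero 2 hsne)) h2
    apply hsne
    linear_combination -h3/4
  refine ⟨a, b, hane, ?_, htab, ?_⟩
  · ext z
    simp only [Set.mem_setOf_eq, Set.mem_insert_iff, Set.mem_singleton_iff]
    constructor
    · rintro ⟨hne, hpap⟩
      have hd : z.1 - z.2 ≠ 0 := sub_ne_zero.mpr hne
      have hd2 : (z.1 - z.2)^2 ≠ 0 := pow_ne_zero 2 hd
      simp only [pap, Prod.mk.injEq] at hpap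
      obtain ⟨h1, h2⟩ := hpap
      rw [div_eq_iff hd2] at h1 h2
      rw [← hs] at h2
      have hfact : (z.2 - s*(z.1 - z.2)) * (z.2 + s*(z.1 - z.2)) = 0 := by
        linear_combination h2
      rcases mul_eq_zero.mp hfact with hy | hy
      · left
        have hy' : z.2 = s*(z.1 - z.2) := by linear_combination hy
        have key : (z.1 - z.2) * ((z.1 - z.2)*(p + 2*s) - 4*s) = 0 := by
          linear_combination -h1 + (4 - 2*(z.1 - z.2))*hy'
        have hdv : (z.1 - z.2)*(p + 2*s) = 4*s := by
          rcases mul_eq_zero.mp key with h | h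
          · exact absurd h hd
          · linear_combination h
        have hz2 : z.2 = 4*s^2/(p+2*s) := by
          rw [eq_div_iff hps]; linear_combination s*hdv + (p+2*s)*hy'
        have hz1 : z.1 = (4*s^2+4*s)/(p+2*s) := by
          rw [eq_div_iff hps]; linear_combination hdv + (p+2*s)*hy' + s*hdv
        exact Prod.ext hz1 hz2
      · right
        have hy' : z.2 = -s*(z.1 - z.2) := by linear_combination hy
        have key : (z.1 - z.2) * ((z.1 - z.2)*(p - 2*s) + 4*s) = 0 := by
          linear_combination -h1 + (4 - 2*(z.1 - z.2))*hy'
        have hdv : (z.1 - z.2)*(p - 2*s) = -(4*s) := by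
          rcases mul_eq_zero.mp key with h | h
          · exact absurd h hd
          · linear_combination h
        have hz2 : z.2 = 4*s^2/(p-2*s) := by
          rw [eq_div_iff hms]; linear_combination -s*hdv + (p-2*s)*hy'
        have hz1 : z.1 = (4*s^2-4*s)/(p-2*s) := by
          rw [eq_div_iff hms]; linear_combination hdv + (p-2*s)*hy' - s*hdv
        exact Prod.ext hz1 hz2
    · rintro (rfl | rfl)
      · exact ⟨hafib.1, by rw [hafib.2, hs]⟩
      · exact ⟨hbfib.1, by rw [hbfib.2, hs]⟩
  · exact htba
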